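/- Let X = ℝ² equipped with the supremum norm ‖(a,b)‖ = max(|a|, |b|), and let Ω = {(z₁, z₂) ∈ ℝ² : z₂ < 0}. Then the quasihyperbolic distance between a = (−1,−2) and b = (1,−2) satisfies k_Ω(a, b) ≤ log(9/4) < 1; in particular, the broken line through c = (0,−3), consisting of the segments [a,c] and [c,b], has quasihyperbolic length 2·∫₀¹ 1/(3 − t) dt = log(9/4). -/

import Mathlib

set_option linter.unnecessarySimpa false
set_option maxHeartbeats 1000000

/-- The quasihyperbolic length of a path `γ` on `[a,b]` in a domain `Ω`:
`ℓ_k(γ) = ∫ₐᵇ ‖γ′(t)‖ / d(γ(t)) dt`, where `d(x) = dist(x, X ∖ Ω)`. -/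
noncomputable def qhLength {X : Type*} [NormedAddCommGroup X] [NormedSpace ℝ X]
    (Ω : Set X) (γ : ℝ → X) (a b : ℝ) : ℝ :=
  ∫ t in a..b, ‖deriv γ t‖ / Metric.infDist (γ t) Ωᶜ

/-- The quasihyperbolic distance on a domain `Ω`: the infimum of quasihyperbolic lengths
over continuously differentiable paths in `Ω` joining the two points. -/
noncomputable def qhDist {X : Type*} [NormedAddCommGroup X] [NormedSpace ℝ X]
    (Ω : Set X) (x y : X) : ℝ :=
  sInf ((fun γ : ℝ → X => qhLength Ω γ 0 1) ''
    {γ | ContDiff ℝ 1 γ ∧ Set.MapsTo γ (Set.Icc 0 1) Ω ∧ γ 0 = x ∧ γ 1 = y})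

/-- The broken line from `a = (−1,−2)` through `c = (0,−3)` to `b = (1,−2)`,
parameterized over `[0,1]`. -/
noncomputable def brokenLine : ℝ → (Fin 2 → ℝ) := fun t =>
  if t ≤ 1 / 2 then ![-1 + 2 * t, -2 - 2 * t] else ![2 * t - 1, -4 + 2 * t]

lemma norm_fin2 (a b : ℝ) : ‖(![a, b] : Fin 2 → ℝ)‖ = max |a| |b| := by
  apply le_antisymm
  · refine (pi_norm_le_iff_of_nonneg (le_max_iff.2 (Or.inl (abs_nonneg a)))).2 ?_
    intro i; fin_cases i
    · simpa using le_max_left _ _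
    · simpa using le_max_right _ _
  · refine max_le ?_ ?_
    · simpa using norm_le_pi_norm (![a,b] : Fin 2 → ℝ) 0
    · simpa using norm_le_pi_norm (![a,b] : Fin 2 → ℝ) 1

lemma hasDerivAt_fin2 {f g : ℝ → ℝ} {f' g' t : ℝ} (hf : HasDerivAt f f' t)
    (hg : HasDerivAt g g' t) : HasDerivAt (fun s => (![f s, g s] : Fin 2 → ℝ)) ![f', g'] t := by
  refine hasDerivAt_pi.2 ?_
  intro i; fin_cases i
  · simpa using hf
  · simpa using hg

lemma hasDerivAt_linear (a b t : ℝ) : HasDerivAt (fun s : ℝ => a + b * s) b t := by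
  simpa using ((hasDerivAt_id t).const_mul b).const_add a

lemma infDist_halfPlane (z : Fin 2 → ℝ) (hz : z 1 < 0) :
    Metric.infDist z {z : Fin 2 → ℝ | z 1 < 0}ᶜ = -(z 1) := by
  have hmem : ![z 0, 0] ∈ {z : Fin 2 → ℝ | z 1 < 0}ᶜ := by
    simp [Set.mem_setOf_eq]
  apply le_antisymm
  · refine (Metric.infDist_le_dist_of_mem hmem).trans ?_
    rw [dist_pi_le_iff (by linarith)]
    intro i
    fin_cases i
    · simpa using by linarith
    · simp [Real.dist_eq, abs_of_nonpos hz.le]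
  · refine le_of_not_gt fun h => ?_
    rw [Metric.infDist_lt_iff ⟨_, hmem⟩] at h
    obtain ⟨w, hw, hd⟩ := h
    simp only [Set.mem_compl_iff, Set.mem_setOf_eq, not_lt] at hw
    have h1 : dist (z 1) (w 1) ≤ dist z w := dist_le_pi_dist z w 1
    rw [Real.dist_eq] at h1
    have : -(z 1) ≤ |z 1 - w 1| := le_trans (by linarith) (neg_le_abs _)
    linarith

/-- the smooth approximating path -/
noncomputable def sp (ε : ℝ) : ℝ → Fin 2 → ℝ := fun t =>
  ![-1 + 2*t, -3 + Real.sqrt ((-1+2*t)^2 + ε^2) / Real.sqrt (1+ε^2)]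

section SP
variable {ε : ℝ} (hε : 0 < ε) (hε1 : ε < 1)
include hε

lemma sqrt_u_pos (t : ℝ) : 0 < Real.sqrt ((-1+2*t)^2 + ε^2) :=
  Real.sqrt_pos.2 (by positivity)

lemma u_ne (t : ℝ) : (-1+2*t)^2 + ε^2 ≠ 0 := by positivity

lemma sqrt_one_add_pos : 0 < Real.sqrt (1+ε^2) := Real.sqrt_pos.2 (by positivity)

lemma sp_hasDerivAt (t : ℝ) :
    HasDerivAt (sp ε) ![2, 2*(-1+2*t) / (Real.sqrt ((-1+2*t)^2 + ε^2) * Real.sqrt (1+ε^2))] t := by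
  have h1 : HasDerivAt (fun s : ℝ => -1 + 2*s) 2 t := hasDerivAt_linear (-1) 2 t
  have h2 : HasDerivAt (fun s : ℝ => (-1+2*s)^2 + ε^2) (2*(-1+2*t)^1*2) t :=
    (h1.pow 2).add_const _
  have h3 := (h2.sqrt (u_ne hε t)).div_const (Real.sqrt (1+ε^2))
  have h4 := h3.const_add (-3)
  have h5 := hasDerivAt_fin2 h1 h4
  convert h5 using 2
  have hs := sqrt_u_pos hε t
  congr 1
  field_simp
end SP

section SP2
variable {ε : ℝ} (hε : 0 < ε) (hε1 : ε < 1)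
include hε

lemma abs_le_sqrt_u (t : ℝ) : |(-1+2*t)| ≤ Real.sqrt ((-1+2*t)^2 + ε^2) := by
  rw [← Real.sqrt_sq_eq_abs]
  exact Real.sqrt_le_sqrt (by nlinarith)

lemma sqrt_u_le (t : ℝ) : Real.sqrt ((-1+2*t)^2 + ε^2) ≤ |(-1+2*t)| + ε := by
  rw [show |(-1+2*t)| + ε = Real.sqrt ((|(-1+2*t)| + ε)^2) from
    (Real.sqrt_sq (by positivity)).symm]
  apply Real.sqrt_le_sqrt
  have := abs_nonneg (-1+2*t)
  nlinarith [sq_abs (-1+2*t)]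

lemma one_le_sqrt_one_add : 1 ≤ Real.sqrt (1+ε^2) := by
  nlinarith [Real.sq_sqrt (show (0:ℝ) ≤ 1+ε^2 by positivity), Real.sqrt_nonneg (1+ε^2)]

lemma sp_deriv_norm (t : ℝ) : ‖deriv (sp ε) t‖ = 2 := by
  rw [(sp_hasDerivAt hε t).deriv, norm_fin2]
  have h1 := abs_le_sqrt_u hε t
  have h2 := one_le_sqrt_one_add hε
  have hs := sqrt_u_pos hε t
  have hden : (0:ℝ) < Real.sqrt ((-1+2*t)^2 + ε^2) * Real.sqrt (1+ε^2) :=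
    mul_pos hs (by linarith)
  have habs : |2*(-1+2*t) / (Real.sqrt ((-1+2*t)^2 + ε^2) * Real.sqrt (1+ε^2))| ≤ 2 := by
    rw [abs_div, abs_of_pos hden, div_le_iff₀ hden, abs_mul]
    have h3 : |(-1+2*t)| ≤ Real.sqrt ((-1+2*t)^2 + ε^2) * Real.sqrt (1+ε^2) := by
      nlinarith [abs_nonneg (-1+2*t)]
    have h4 : |(2:ℝ)| = 2 := by norm_num
    nlinarith [abs_nonneg (-1+2*t)]
  rw [max_eq_left]
  · norm_num
  · norm_num at habs ⊢
    linarith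

lemma sp_snd (t : ℝ) : sp ε t 1 = -3 + Real.sqrt ((-1+2*t)^2 + ε^2) / Real.sqrt (1+ε^2) := by
  simp [sp]

omit hε in
lemma sp_snd' (t : ℝ) : sp ε t 1 = -3 + Real.sqrt ((-1+2*t)^2 + ε^2) / Real.sqrt (1+ε^2) := by
  simp [sp]

lemma sp_in_domain {t : ℝ} (ht : t ∈ Set.Icc (0:ℝ) 1) : sp ε t 1 < 0 := by
  rw [sp_snd']
  have h2 := one_le_sqrt_one_add (ε := ε) hε
  have hu : Real.sqrt ((-1+2*t)^2 + ε^2) ≤ Real.sqrt (1+ε^2) := by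
    apply Real.sqrt_le_sqrt
    have := ht.1; have := ht.2
    nlinarith
  have : Real.sqrt ((-1+2*t)^2 + ε^2) / Real.sqrt (1+ε^2) ≤ 1 := by
    rw [div_le_one (by linarith)]
    exact hu
  linarith

lemma sp_contDiff : ContDiff ℝ 1 (sp ε) := by
  rw [contDiff_pi]
  intro i
  fin_cases i
  · simpa [sp] using (contDiff_const.add (contDiff_const.mul contDiff_id) : ContDiff ℝ 1 fun t : ℝ => -1 + 2*t)
  · simp only [sp]
    have hpoly : ContDiff ℝ 1 (fun t : ℝ => (-1+2*t)^2 + ε^2) := by fun_prop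
    have hs : ContDiff ℝ 1 (fun t : ℝ => Real.sqrt ((-1+2*t)^2 + ε^2)) :=
      hpoly.sqrt (fun t => u_ne hε t)
    simpa using contDiff_const.add (hs.div_const (Real.sqrt (1+ε^2)))

lemma sp_zero : sp ε 0 = ![(-1 : ℝ), -2] := by
  funext i
  fin_cases i
  · norm_num [sp]
  · have h : ((-1:ℝ)+2*0)^2 + ε^2 = 1 + ε^2 := by norm_num
    have hpos : (0:ℝ) < Real.sqrt (1+ε^2) := sqrt_one_add_pos hε
    simp only [sp]
    norm_num [h]
    rw [div_self (by linarith)]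
    norm_num

lemma sp_one : sp ε 1 = ![(1 : ℝ), -2] := by
  funext i
  fin_cases i
  · norm_num [sp]
  · have h : ((-1:ℝ)+2*1)^2 + ε^2 = 1 + ε^2 := by norm_num
    have hpos : (0:ℝ) < Real.sqrt (1+ε^2) := sqrt_one_add_pos hε
    simp only [sp]
    norm_num [h]
    rw [div_self (by linarith)]
    norm_num
end SP2

lemma qhLength_sp_le {ε : ℝ} (hε : 0 < ε) (hε1 : ε < 1) :
    qhLength {z : Fin 2 → ℝ | z 1 < 0} (sp ε) 0 1
      ≤ 2 * (Real.log (3-ε) - Real.log (2-ε)) := by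
  have hs1 : (0:ℝ) < Real.sqrt (1+ε^2) := sqrt_one_add_pos hε
  have h1s : (1:ℝ) ≤ Real.sqrt (1+ε^2) := one_le_sqrt_one_add hε
  -- rewrite the length as an explicit integral
  have hcongr : qhLength {z : Fin 2 → ℝ | z 1 < 0} (sp ε) 0 1 =
      ∫ t in (0:ℝ)..1, 2 / (3 - Real.sqrt ((-1+2*t)^2+ε^2)/Real.sqrt (1+ε^2)) := by
    rw [qhLength]
    apply intervalIntegral.integral_congr
    intro t ht
    rw [Set.uIcc_of_le (by norm_num)] at ht
    dsimp only
    rw [sp_deriv_norm hε t, infDist_halfPlane _ (sp_in_domain hε ht), sp_snd']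
    congr 1
    ring
  rw [hcongr]
  -- the comparison function
  set g : ℝ → ℝ := fun t => 2/(3-ε-|(-1+2*t)|) with hg_def
  have hquot_le : ∀ t : ℝ, Real.sqrt ((-1+2*t)^2+ε^2)/Real.sqrt (1+ε^2) ≤ |(-1+2*t)| + ε := by
    intro t
    refine le_trans ?_ (sqrt_u_le hε t)
    exact div_le_self (Real.sqrt_nonneg _) h1s
  have habs1 : ∀ t ∈ Set.Icc (0:ℝ) 1, |(-1+2*t)| ≤ 1 := by
    intro t ht
    rw [abs_le]
    constructor <;> [linarith [ht.1]; linarith [ht.2]]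
  have hden_f : ∀ t : ℝ, t ∈ Set.Icc (0:ℝ) 1 →
      0 < 3 - ε - |(-1+2*t)| := by
    intro t ht
    have := habs1 t ht
    linarith
  have hle : ∀ t ∈ Set.Icc (0:ℝ) 1,
      2 / (3 - Real.sqrt ((-1+2*t)^2+ε^2)/Real.sqrt (1+ε^2)) ≤ g t := by
    intro t ht
    have h1 := hquot_le t
    have h2 := hden_f t ht
    have h3 : 0 < 3 - ε - |(-1+2*t)| := h2
    apply div_le_div_of_nonneg_left (by norm_num) h3
    linarith
  -- integrability of both
  have hfc : ContinuousOn (fun t : ℝ => 2 / (3 - Real.sqrt ((-1+2*t)^2+ε^2)/Real.sqrt (1+ε^2)))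
      (Set.uIcc (0:ℝ) 1) := by
    apply ContinuousOn.div continuousOn_const
    · apply ContinuousOn.sub continuousOn_const
      apply ContinuousOn.div_const
      exact (Real.continuous_sqrt.comp (by fun_prop)).continuousOn
    · intro t ht
      rw [Set.uIcc_of_le (by norm_num)] at ht
      have := hquot_le t
      have := habs1 t ht
      intro h
      linarith [hquot_le t]
  have hgc : ContinuousOn g (Set.uIcc (0:ℝ) 1) := by
    apply ContinuousOn.div continuousOn_const
    · fun_prop
    · intro t ht
      rw [Set.uIcc_of_le (by norm_num)] at ht
      have := hden_f t ht
      intro h; linarith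
  have hmono := intervalIntegral.integral_mono_on (μ := MeasureTheory.volume) (by norm_num : (0:ℝ) ≤ 1)
    (hfc.intervalIntegrable) (hgc.intervalIntegrable) hle
  refine hmono.trans ?_
  -- compute ∫ g
  have heq1 : Set.EqOn g (fun t : ℝ => 2/(2-ε+2*t)) (Set.uIcc (0:ℝ) (1/2)) := by
    intro t ht
    rw [Set.uIcc_of_le (by norm_num)] at ht
    have : (-1+2*t) ≤ 0 := by linarith [ht.2]
    simp only [hg_def, abs_of_nonpos this]
    congr 1
    ring
  have heq2 : Set.EqOn g (fun t : ℝ => 2/(4-ε-2*t)) (Set.uIcc (1/2:ℝ) 1) := by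
    intro t ht
    rw [Set.uIcc_of_le (by norm_num)] at ht
    have : (0:ℝ) ≤ -1+2*t := by linarith [ht.1]
    simp only [hg_def, abs_of_nonneg this]
    congr 1
    ring
  have hc1 : ContinuousOn (fun t : ℝ => 2/(2-ε+2*t)) (Set.uIcc (0:ℝ) (1/2)) := by
    apply ContinuousOn.div continuousOn_const (by fun_prop)
    intro t ht
    rw [Set.uIcc_of_le (by norm_num)] at ht
    have := ht.1; intro h; linarith
  have hc2 : ContinuousOn (fun t : ℝ => 2/(4-ε-2*t)) (Set.uIcc (1/2:ℝ) 1) := by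
    apply ContinuousOn.div continuousOn_const (by fun_prop)
    intro t ht
    rw [Set.uIcc_of_le (by norm_num)] at ht
    have := ht.2; intro h; linarith
  have hsplit : (∫ t in (0:ℝ)..1, g t) = (∫ t in (0:ℝ)..(1/2), g t) + ∫ t in (1/2:ℝ)..1, g t :=
    (intervalIntegral.integral_add_adjacent_intervals
      (hc1.congr heq1).intervalIntegrable (hc2.congr heq2).intervalIntegrable).symm
  have hI1 : (∫ t in (0:ℝ)..(1/2), g t) = Real.log (3-ε) - Real.log (2-ε) := by
    rw [intervalIntegral.integral_congr heq1]
    have h : ∀ t ∈ Set.uIcc (0:ℝ) (1/2), HasDerivAt (fun s => Real.log (2-ε+2*s)) (2/(2-ε+2*t)) t := by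
      intro t ht
      rw [Set.uIcc_of_le (by norm_num)] at ht
      have hne : 2-ε+2*t ≠ 0 := by have := ht.1; intro h; linarith
      exact (hasDerivAt_linear (2-ε) 2 t).log hne
    rw [intervalIntegral.integral_eq_sub_of_hasDerivAt h hc1.intervalIntegrable]
    rw [show 2-ε+2*(1/2:ℝ) = 3-ε by ring, show 2-ε+2*(0:ℝ) = 2-ε by ring]
  have hI2 : (∫ t in (1/2:ℝ)..1, g t) = Real.log (3-ε) - Real.log (2-ε) := by
    rw [intervalIntegral.integral_congr heq2]
    have h : ∀ t ∈ Set.uIcc (1/2:ℝ) 1, HasDerivAt (fun s => -Real.log (4-ε-2*s)) (2/(4-ε-2*t)) t := by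
      intro t ht
      rw [Set.uIcc_of_le (by norm_num)] at ht
      have hne : 4-ε-2*t ≠ 0 := by have := ht.2; intro h; linarith
      have hlin : HasDerivAt (fun s : ℝ => 4-ε-2*s) (-2) t := by
        simpa using ((hasDerivAt_id t).const_mul 2).const_sub (4-ε)
      have := (hlin.log hne).neg
      simpa [neg_div, Pi.neg_def] using this
    rw [intervalIntegral.integral_eq_sub_of_hasDerivAt h hc2.intervalIntegrable]
    rw [show 4-ε-2*(1:ℝ) = 2-ε by ring, show 4-ε-2*(1/2:ℝ) = 3-ε by ring]
    ring
  rw [hsplit, hI1, hI2]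
  linarith


lemma deriv_brokenLine_left {t : ℝ} (ht : t < 1/2) : deriv brokenLine t = ![2, -2] := by
  have h : brokenLine =ᶠ[nhds t] fun s => ![-1 + 2*s, -2 + (-2) * s] := by
    filter_upwards [Iio_mem_nhds ht] with s hs
    have : s ≤ 1/2 := le_of_lt hs
    simp only [brokenLine, if_pos this]
    congr 1 <;> ring_nf <;> (try congr 1) <;> ring_nf
  rw [Filter.EventuallyEq.deriv_eq h]
  exact (hasDerivAt_fin2 (by simpa using hasDerivAt_linear (-1) 2 t)
    (hasDerivAt_linear (-2) (-2) t)).deriv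

lemma deriv_brokenLine_right {t : ℝ} (ht : 1/2 < t) : deriv brokenLine t = ![2, 2] := by
  have h : brokenLine =ᶠ[nhds t] fun s => ![-1 + 2*s, -4 + 2 * s] := by
    filter_upwards [Ioi_mem_nhds ht] with s hs
    have : ¬ (s ≤ 1/2) := not_le.2 hs
    simp only [brokenLine, if_neg this]
    congr 1 <;> ring_nf <;> (try congr 1) <;> ring_nf
  rw [Filter.EventuallyEq.deriv_eq h]
  exact (hasDerivAt_fin2 (by simpa using hasDerivAt_linear (-1) 2 t)
    (hasDerivAt_linear (-4) 2 t)).deriv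

open intervalIntegral MeasureTheory in
lemma integral_one_div_three_sub : (∫ t in (0:ℝ)..1, 1/(3-t)) = Real.log 3 - Real.log 2 := by
  have h : ∀ t ∈ Set.uIcc (0:ℝ) 1, HasDerivAt (fun s => -Real.log (3-s)) (1/(3-t)) t := by
    intro t ht
    rw [Set.uIcc_of_le (by norm_num)] at ht
    have hne : 3 - t ≠ 0 := by have := ht.2; intro h; linarith
    have := (((hasDerivAt_id t).const_sub 3).log hne).neg
    simpa [neg_div, Pi.neg_def] using this
  have hint : IntervalIntegrable (fun t : ℝ => 1/(3-t)) volume 0 1 := by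
    apply ContinuousOn.intervalIntegrable
    apply ContinuousOn.div continuousOn_const (by fun_prop)
    intro t ht
    rw [Set.uIcc_of_le (by norm_num)] at ht
    have := ht.2; intro h; linarith
  rw [intervalIntegral.integral_eq_sub_of_hasDerivAt h hint]
  norm_num
  ring

open intervalIntegral MeasureTheory in
lemma brokenLine_length :
    (∫ t in (0 : ℝ)..1, ‖deriv brokenLine t‖ / (-(brokenLine t 1))) =
      2 * ∫ t in (0 : ℝ)..1, 1 / (3 - t) := by
  set g : ℝ → ℝ := fun t => if t ≤ 1/2 then 2/(2+2*t) else 2/(4-2*t) with hg_def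
  have hpt : ∀ t : ℝ, t ≠ 1/2 → ‖deriv brokenLine t‖ / (-(brokenLine t 1)) = g t := by
    intro t ht
    rcases lt_or_gt_of_ne ht with h | h
    · rw [deriv_brokenLine_left h, norm_fin2]
      simp only [hg_def, brokenLine, if_pos h.le, if_pos (le_of_lt h)]
      norm_num
      ring_nf
    · rw [deriv_brokenLine_right h, norm_fin2]
      simp only [hg_def, brokenLine, if_neg (not_le.2 h), if_neg (not_le.2 h)]
      norm_num
      ring_nf
  have hae : (∫ t in (0:ℝ)..1, ‖deriv brokenLine t‖ / (-(brokenLine t 1))) = ∫ t in (0:ℝ)..1, g t := by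
    apply intervalIntegral.integral_congr_ae
    have hne : ∀ᵐ t : ℝ, t ≠ (1/2 : ℝ) := by
      rw [MeasureTheory.ae_iff]
      have : {t : ℝ | ¬ t ≠ 1/2} = {(1/2 : ℝ)} := by ext s; simp
      rw [this]
      exact measure_singleton _
    filter_upwards [hne] with t ht _
    exact hpt t ht
  -- continuity of the two pieces
  have hc1 : ContinuousOn (fun t : ℝ => 2/(2+2*t)) (Set.uIcc (0:ℝ) (1/2)) := by
    apply ContinuousOn.div continuousOn_const (by fun_prop)
    intro t ht
    rw [Set.uIcc_of_le (by norm_num)] at ht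
    have := ht.1; intro h; linarith
  have hc2 : ContinuousOn (fun t : ℝ => 2/(4-2*t)) (Set.uIcc (1/2:ℝ) 1) := by
    apply ContinuousOn.div continuousOn_const (by fun_prop)
    intro t ht
    rw [Set.uIcc_of_le (by norm_num)] at ht
    have := ht.2; intro h; linarith
  have heq1 : Set.EqOn g (fun t : ℝ => 2/(2+2*t)) (Set.uIcc (0:ℝ) (1/2)) := by
    intro t ht
    rw [Set.uIcc_of_le (by norm_num)] at ht
    simp only [hg_def, if_pos ht.2]
  have heq2 : Set.EqOn g (fun t : ℝ => 2/(4-2*t)) (Set.uIcc (1/2:ℝ) 1) := by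
    intro t ht
    rw [Set.uIcc_of_le (by norm_num)] at ht
    by_cases h : t ≤ 1/2
    · have : t = 1/2 := le_antisymm h ht.1
      subst this
      simp only [hg_def, if_pos le_rfl]
      norm_num
    · simp only [hg_def, if_neg h]
  have hi1 : IntervalIntegrable g volume 0 (1/2) :=
    (hc1.congr heq1).intervalIntegrable
  have hi2 : IntervalIntegrable g volume (1/2) 1 :=
    (hc2.congr heq2).intervalIntegrable
  have hsplit : (∫ t in (0:ℝ)..1, g t) = (∫ t in (0:ℝ)..(1/2), g t) + ∫ t in (1/2:ℝ)..1, g t :=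
    (intervalIntegral.integral_add_adjacent_intervals hi1 hi2).symm
  have hI1 : (∫ t in (0:ℝ)..(1/2), g t) = Real.log 3 - Real.log 2 := by
    rw [intervalIntegral.integral_congr heq1]
    have h : ∀ t ∈ Set.uIcc (0:ℝ) (1/2), HasDerivAt (fun s => Real.log (2+2*s)) (2/(2+2*t)) t := by
      intro t ht
      rw [Set.uIcc_of_le (by norm_num)] at ht
      have hne : 2 + 2*t ≠ 0 := by have := ht.1; intro h; linarith
      exact (hasDerivAt_linear 2 2 t).log hne
    rw [intervalIntegral.integral_eq_sub_of_hasDerivAt h (hc1.intervalIntegrable)]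
    norm_num
  have hI2 : (∫ t in (1/2:ℝ)..1, g t) = Real.log 3 - Real.log 2 := by
    rw [intervalIntegral.integral_congr heq2]
    have h : ∀ t ∈ Set.uIcc (1/2:ℝ) 1, HasDerivAt (fun s => -Real.log (4-2*s)) (2/(4-2*t)) t := by
      intro t ht
      rw [Set.uIcc_of_le (by norm_num)] at ht
      have hne : 4 - 2*t ≠ 0 := by have := ht.2; intro h; linarith
      have h2 : HasDerivAt (fun s : ℝ => 4 - 2*s) (-2) t := by
        simpa using ((hasDerivAt_id t).const_mul 2).const_sub 4
      have := (h2.log hne).neg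
      simpa [neg_div, Pi.neg_def] using this
    rw [intervalIntegral.integral_eq_sub_of_hasDerivAt h (hc2.intervalIntegrable)]
    norm_num
    ring
  rw [hae, hsplit, hI1, hI2, integral_one_div_three_sub]
  ring


lemma log94 : Real.log (9/4) = 2 * (Real.log 3 - Real.log 2) := by
  rw [show (9:ℝ)/4 = (3/2)^2 by norm_num, Real.log_pow, Real.log_div (by norm_num) (by norm_num)]
  push_cast; ring

lemma sp_mem_paths {ε : ℝ} (hε : 0 < ε) :
    sp ε ∈ {γ : ℝ → Fin 2 → ℝ | ContDiff ℝ 1 γ ∧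
      Set.MapsTo γ (Set.Icc 0 1) {z : Fin 2 → ℝ | z 1 < 0} ∧
      γ 0 = ![-1, -2] ∧ γ 1 = ![1, -2]} := by
  refine ⟨sp_contDiff hε, fun t ht => ?_, sp_zero hε, sp_one hε⟩
  exact sp_in_domain hε ht

/-- In `ℝ²` with the supremum norm (here `Fin 2 → ℝ` with the sup norm) and the lower
half-plane `Ω = {z : z₂ < 0}` (for which `d(z) = −z₂`): the quasihyperbolic distance
between `a = (−1,−2)` and `b = (1,−2)` is at most `log(9/4) < 1`; in particular the
broken line through `c = (0,−3)` has quasihyperbolic length `2·∫₀¹ 1/(3−t) dt = log(9/4)`. -/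
theorem qhDist_halfPlane_sup_brokenLine :
    qhDist {z : Fin 2 → ℝ | z 1 < 0} ![-1, -2] ![1, -2] ≤ Real.log (9 / 4) ∧
    Real.log (9 / 4) < 1 ∧
    (∫ t in (0 : ℝ)..1, ‖deriv brokenLine t‖ / (-(brokenLine t 1))) =
      2 * ∫ t in (0 : ℝ)..1, 1 / (3 - t) ∧
    (2 * ∫ t in (0 : ℝ)..1, 1 / (3 - t)) = Real.log (9 / 4) := by
  refine ⟨?_, ?_, brokenLine_length, ?_⟩
  · -- the quasihyperbolic distance bound
    rw [qhDist]
    set S := ((fun γ : ℝ → Fin 2 → ℝ => qhLength {z : Fin 2 → ℝ | z 1 < 0} γ 0 1) ''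
      {γ | ContDiff ℝ 1 γ ∧ Set.MapsTo γ (Set.Icc 0 1) {z : Fin 2 → ℝ | z 1 < 0} ∧
        γ 0 = ![-1, -2] ∧ γ 1 = ![1, -2]}) with hS
    have hne : S.Nonempty :=
      ⟨_, ⟨sp (1/2), sp_mem_paths (by norm_num), rfl⟩⟩
    have hbdd : BddBelow S := by
      refine ⟨0, ?_⟩
      rintro x ⟨γ, -, rfl⟩
      exact intervalIntegral.integral_nonneg (by norm_num)
        (fun t _ => div_nonneg (norm_nonneg _) Metric.infDist_nonneg)
    rw [Real.sInf_le_iff hbdd hne]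
    intro δ hδ
    have hcont : ContinuousAt (fun e : ℝ => 2 * (Real.log (3-e) - Real.log (2-e))) 0 := by
      apply ContinuousAt.mul continuousAt_const
      apply ContinuousAt.sub
      · exact ContinuousAt.log (by fun_prop) (by norm_num)
      · exact ContinuousAt.log (by fun_prop) (by norm_num)
    have h0 : (fun e : ℝ => 2 * (Real.log (3-e) - Real.log (2-e))) 0 = Real.log (9/4) := by
      rw [log94]; norm_num
    have htend : Filter.Tendsto (fun e : ℝ => 2 * (Real.log (3-e) - Real.log (2-e)))
        (nhds 0) (nhds (Real.log (9/4))) := h0 ▸ hcont.tendsto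
    have hev1 : ∀ᶠ e in nhds (0:ℝ),
        2 * (Real.log (3-e) - Real.log (2-e)) < Real.log (9/4) + δ :=
      htend.eventually_lt_const (by linarith)
    have hev2 : ∀ᶠ e in nhdsWithin (0:ℝ) (Set.Ioi 0),
        (2 * (Real.log (3-e) - Real.log (2-e)) < Real.log (9/4) + δ) ∧ e < 1 :=
      ((hev1.and (eventually_lt_nhds (by norm_num : (0:ℝ) < 1))).filter_mono nhdsWithin_le_nhds)
    have hev3 : ∀ᶠ e in nhdsWithin (0:ℝ) (Set.Ioi 0), (0:ℝ) < e :=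
      eventually_mem_nhdsWithin
    obtain ⟨ε, ⟨hB, hε1⟩, hε0⟩ := (hev2.and hev3).exists
    refine ⟨qhLength {z : Fin 2 → ℝ | z 1 < 0} (sp ε) 0 1,
      ⟨sp ε, sp_mem_paths hε0, rfl⟩, lt_of_le_of_lt (qhLength_sp_le hε0 hε1) hB⟩
  · rw [Real.log_lt_iff_lt_exp (by norm_num)]
    have := Real.exp_one_gt_d9
    linarith
  · rw [integral_one_div_three_sub, log94]
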